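/- If X_free and X_goal are open subsets of ℝⁿ, then the set X_goal^traj of trajectories that remain in X_free and terminate in X_goal (i.e., x(t) ∈ X_free for all t ∈ [0,τ(x)] and x(τ(x)) ∈ X_goal) is an open subset of (X_{x_ic}, d_X). -/

import Mathlib

open Set

/-- A trajectory from `x_ic`: Lipschitz constant at most `M`, compact time domain `[0, τ]`. -/
structure Traj (n : ℕ) (M : NNReal) (xic : EuclideanSpace ℝ (Fin n)) where
  τ : ℝ
  τ_pos : 0 < τ
  val : ℝ → EuclideanSpace ℝ (Fin n)
  init : val 0 = xic
  lip : LipschitzOnWith M val (Icc (0 : ℝ) τ)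

/-- The metric `d_X` on the trajectory space. -/
noncomputable def dX {n : ℕ} {M : NNReal} {xic : EuclideanSpace ℝ (Fin n)}
    (x₁ x₂ : Traj n M xic) : ℝ :=
  (⨆ t : Icc (0 : ℝ) (min x₁.τ x₂.τ), ‖x₁.val t - x₂.val t‖) +
    (M : ℝ) * |x₁.τ - x₂.τ|

/-- If `X_free` and `X_goal` are open subsets of `ℝⁿ`, then the set of trajectories that
remain in `X_free` and terminate in `X_goal` is open in `(X_{x_ic}, d_X)`. -/
theorem goal_trajectories_open {n : ℕ} (M : NNReal)
    (xic : EuclideanSpace ℝ (Fin n))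
    (Xfree Xgoal : Set (EuclideanSpace ℝ (Fin n)))
    (hXfree : IsOpen Xfree) (hXgoal : IsOpen Xgoal) :
    ∀ x : Traj n M xic,
      ((∀ t ∈ Icc (0 : ℝ) x.τ, x.val t ∈ Xfree) ∧ x.val x.τ ∈ Xgoal) →
      ∃ ε > 0, ∀ y : Traj n M xic, dX x y < ε →
        ((∀ t ∈ Icc (0 : ℝ) y.τ, y.val t ∈ Xfree) ∧ y.val y.τ ∈ Xgoal) := by
  rintro x ⟨hfree, hgoal⟩
  -- compact image of x inside the open set Xfree
  have hK : IsCompact (x.val '' Icc (0 : ℝ) x.τ) :=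
    isCompact_Icc.image_of_continuousOn x.lip.continuousOn
  have hKsub : x.val '' Icc (0 : ℝ) x.τ ⊆ Xfree := by
    rintro _ ⟨t, ht, rfl⟩; exact hfree t ht
  obtain ⟨δ₁, hδ₁, hth⟩ := hK.exists_thickening_subset_open hXfree hKsub
  obtain ⟨δ₂, hδ₂, hball⟩ := Metric.isOpen_iff.1 hXgoal _ hgoal
  refine ⟨min δ₁ δ₂, lt_min hδ₁ hδ₂, fun y hxy => ?_⟩
  set m := min x.τ y.τ with hm
  have hm0 : (0 : ℝ) < m := lt_min x.τ_pos y.τ_pos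
  set S : ℝ := ⨆ t : Icc (0 : ℝ) m, ‖x.val t - y.val t‖ with hSdef
  have hc : ContinuousOn (fun t => ‖x.val t - y.val t‖) (Icc (0 : ℝ) m) :=
    ((x.lip.continuousOn.mono (Icc_subset_Icc_right (min_le_left _ _))).sub
      (y.lip.continuousOn.mono (Icc_subset_Icc_right (min_le_right _ _)))).norm
  have hbdd : BddAbove (range fun t : Icc (0 : ℝ) m => ‖x.val t - y.val t‖) := by
    have h := (isCompact_Icc.image_of_continuousOn hc).bddAbove
    refine h.mono ?_
    rintro _ ⟨⟨t, ht⟩, rfl⟩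
    exact ⟨t, ht, rfl⟩
  have hS : ∀ t ∈ Icc (0 : ℝ) m, ‖x.val t - y.val t‖ ≤ S := fun t ht =>
    le_ciSup hbdd (⟨t, ht⟩ : Icc (0 : ℝ) m)
  have hS0 : (0 : ℝ) ≤ S :=
    le_trans (norm_nonneg _) (hS 0 ⟨le_rfl, le_of_lt hm0⟩)
  have hdXeq : dX x y = S + (M : ℝ) * |x.τ - y.τ| := rfl
  have hMabs : (0 : ℝ) ≤ (M : ℝ) * |x.τ - y.τ| :=
    mul_nonneg M.coe_nonneg (abs_nonneg _)
  have hS_le : S ≤ dX x y := by rw [hdXeq]; linarith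
  have hM_le : (M : ℝ) * |x.τ - y.τ| ≤ dX x y := by rw [hdXeq]; linarith
  -- estimate towards points of x for any time of y
  have key : ∀ t ∈ Icc (0 : ℝ) y.τ,
      ∃ s ∈ Icc (0 : ℝ) x.τ, ‖y.val t - x.val s‖ ≤ dX x y := by
    intro t ht
    by_cases htx : t ≤ x.τ
    · refine ⟨t, ⟨ht.1, htx⟩, ?_⟩
      have := hS t ⟨ht.1, le_min htx ht.2⟩
      rw [norm_sub_rev] at this
      exact this.trans hS_le
    · push_neg at htx
      refine ⟨x.τ, ⟨le_of_lt x.τ_pos, le_rfl⟩, ?_⟩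
      have hmx : m = x.τ := min_eq_left (le_of_lt (lt_of_lt_of_le htx ht.2))
      have h1 : ‖y.val t - y.val x.τ‖ ≤ (M : ℝ) * |x.τ - y.τ| := by
        have := y.lip.dist_le_mul t ⟨ht.1, ht.2⟩ x.τ
          ⟨le_of_lt x.τ_pos, le_of_lt (lt_of_lt_of_le htx ht.2)⟩
        rw [dist_eq_norm] at this
        refine this.trans (mul_le_mul_of_nonneg_left ?_ M.coe_nonneg)
        rw [Real.dist_eq, abs_sub_comm x.τ y.τ,
          abs_of_nonneg (by linarith : (0:ℝ) ≤ t - x.τ),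
          abs_of_nonneg (by linarith [ht.2] : (0:ℝ) ≤ y.τ - x.τ)]
        linarith [ht.2]
      have h2 : ‖y.val x.τ - x.val x.τ‖ ≤ S := by
        have := hS x.τ ⟨le_of_lt x.τ_pos, hmx ▸ le_rfl⟩
        rw [norm_sub_rev] at this; exact this
      calc ‖y.val t - x.val x.τ‖
          ≤ ‖y.val t - y.val x.τ‖ + ‖y.val x.τ - x.val x.τ‖ := by
            simpa [dist_eq_norm] using dist_triangle (y.val t) (y.val x.τ) (x.val x.τ)
        _ ≤ (M : ℝ) * |x.τ - y.τ| + S := add_le_add h1 h2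
        _ = dX x y := by rw [hdXeq]; ring
  constructor
  · intro t ht
    obtain ⟨s, hs, hns⟩ := key t ht
    apply hth
    rw [Metric.mem_thickening_iff]
    exact ⟨x.val s, Set.mem_image_of_mem _ hs,
      by rw [dist_eq_norm]; exact lt_of_le_of_lt hns (lt_of_lt_of_le hxy (min_le_left _ _))⟩
  · -- endpoint
    have hend : ‖y.val y.τ - x.val x.τ‖ ≤ dX x y := by
      by_cases hty : x.τ ≤ y.τ
      · by_cases hcase : y.τ ≤ x.τ
        · have hxyτ : x.τ = y.τ := le_antisymm hty hcase
          have hmy : m = y.τ := by rw [hm, hxyτ, min_self]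
          have h := hS y.τ ⟨le_of_lt y.τ_pos, hmy ▸ le_rfl⟩
          rw [norm_sub_rev] at h
          rw [hxyτ]
          exact h.trans hS_le
        · push_neg at hcase
          -- x.τ < y.τ : use key with t = y.τ, which gives s = x.τ via the same argument
          have hmx : m = x.τ := min_eq_left hty
          have h1 : ‖y.val y.τ - y.val x.τ‖ ≤ (M : ℝ) * |x.τ - y.τ| := by
            have := y.lip.dist_le_mul y.τ ⟨le_of_lt y.τ_pos, le_rfl⟩ x.τ
              ⟨le_of_lt x.τ_pos, hty⟩
            rw [dist_eq_norm] at this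
            refine this.trans (mul_le_mul_of_nonneg_left ?_ M.coe_nonneg)
            rw [Real.dist_eq]
            rw [abs_of_nonneg (by linarith : (0:ℝ) ≤ y.τ - x.τ),
              abs_of_nonpos (by linarith : x.τ - y.τ ≤ 0)]
            linarith
          have h2 : ‖y.val x.τ - x.val x.τ‖ ≤ S := by
            have := hS x.τ ⟨le_of_lt x.τ_pos, hmx ▸ le_rfl⟩
            rw [norm_sub_rev] at this; exact this
          calc ‖y.val y.τ - x.val x.τ‖
              ≤ ‖y.val y.τ - y.val x.τ‖ + ‖y.val x.τ - x.val x.τ‖ := by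
                simpa [dist_eq_norm] using dist_triangle (y.val y.τ) (y.val x.τ) (x.val x.τ)
            _ ≤ (M : ℝ) * |x.τ - y.τ| + S := add_le_add h1 h2
            _ = dX x y := by rw [hdXeq]; ring
      · push_neg at hty
        have hmy : m = y.τ := min_eq_right (le_of_lt hty)
        have h1 : ‖y.val y.τ - x.val y.τ‖ ≤ S := by
          have := hS y.τ ⟨le_of_lt y.τ_pos, hmy ▸ le_rfl⟩
          rw [norm_sub_rev] at this; exact this
        have h2 : ‖x.val y.τ - x.val x.τ‖ ≤ (M : ℝ) * |x.τ - y.τ| := by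
          have := x.lip.dist_le_mul y.τ ⟨le_of_lt y.τ_pos, le_of_lt hty⟩ x.τ
            ⟨le_of_lt x.τ_pos, le_rfl⟩
          rw [dist_eq_norm] at this
          refine this.trans (mul_le_mul_of_nonneg_left ?_ M.coe_nonneg)
          rw [Real.dist_eq]
          rw [abs_of_nonpos (by linarith : y.τ - x.τ ≤ 0),
            abs_of_nonneg (by linarith : (0:ℝ) ≤ x.τ - y.τ)]
          linarith
        calc ‖y.val y.τ - x.val x.τ‖
            ≤ ‖y.val y.τ - x.val y.τ‖ + ‖x.val y.τ - x.val x.τ‖ := by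
              simpa [dist_eq_norm] using dist_triangle (y.val y.τ) (x.val y.τ) (x.val x.τ)
          _ ≤ S + (M : ℝ) * |x.τ - y.τ| := add_le_add h1 h2
          _ = dX x y := hdXeq.symm
    apply hball
    rw [Metric.mem_ball, dist_eq_norm]
    exact lt_of_le_of_lt hend (lt_of_lt_of_le hxy (min_le_right _ _))
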